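/- The map from policies to occupation measures is continuously differentiable: for a fixed transition kernel P, the map π ↦ μ_π is continuously differentiable (of class C¹) on the set Π of stationary policies (i.e., it is the restriction to Π of a map that is differentiable with continuous derivative within Π). -/

import Mathlib

open scoped BigOperators

variable {S A : Type*}

/-- A stationary policy: nonnegative entries with unit row sums. -/
def IsPolicy [Fintype A] (π : S → A → ℝ) : Prop :=
  (∀ s a, 0 ≤ π s a) ∧ ∀ s, ∑ a, π s a = 1

/-- A transition kernel: nonnegative entries with unit row sums. -/
def IsKernel [Fintype S] (P : S × A → S → ℝ) : Prop :=
  (∀ p s', 0 ≤ P p s') ∧ ∀ p, ∑ s', P p s' = 1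

/-- An initial distribution. -/
def IsInitDist [Fintype S] (ν : S → ℝ) : Prop :=
  (∀ s, 0 ≤ ν s) ∧ ∑ s, ν s = 1

/-- Induced state transition matrix `P_π(s,s') = Σ_a π(s,a) P((s,a),s')`. -/
noncomputable def polMatrix [Fintype A] (P : S × A → S → ℝ) (π : S → A → ℝ) :
    Matrix S S ℝ :=
  Matrix.of fun s s' => ∑ a, π s a * P (s, a) s'

/-- Discounted state distribution `ρ_π(s) = Σ_t γ^t ((P_πᵀ)^t ν)(s)`. -/
noncomputable def stateDist [Fintype S] [Fintype A] [DecidableEq S]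
    (γ : ℝ) (ν : S → ℝ) (P : S × A → S → ℝ) (π : S → A → ℝ) (s : S) : ℝ :=
  ∑' t : ℕ, γ ^ t * (((polMatrix P π).transpose ^ t).mulVec ν s)

/-- Discounted occupation measure `μ_π(s,a) = π(s,a) ρ_π(s)`. -/
noncomputable def occ [Fintype S] [Fintype A] [DecidableEq S]
    (γ : ℝ) (ν : S → ℝ) (P : S × A → S → ℝ) (π : S → A → ℝ) (s : S) (a : A) : ℝ :=
  π s a * stateDist γ ν P π s

section Aux

variable [Fintype S] [Fintype A] [DecidableEq S]

attribute [local instance] Matrix.linftyOpNormedAddCommGroup Matrix.linftyOpNormedRing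
  Matrix.linftyOpNormedSpace Matrix.linftyOpNormedAlgebra

/-- Evaluation `A ↦ (Aᵀ *ᵥ ν) s` as a linear map. -/
noncomputable def evalLM (ν : S → ℝ) (s : S) : Matrix S S ℝ →ₗ[ℝ] ℝ where
  toFun A := A.transpose.mulVec ν s
  map_add' A B := by simp [Matrix.transpose_add, Matrix.add_mulVec]
  map_smul' c A := by simp [Matrix.transpose_smul, Matrix.smul_mulVec]

/-- Evaluation as a continuous linear map (finite dimensions). -/
noncomputable def evalCLM (ν : S → ℝ) (s : S) : Matrix S S ℝ →L[ℝ] ℝ :=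
  LinearMap.toContinuousLinearMap (evalLM ν s)

/-- The policy matrix map as a linear map. -/
noncomputable def polLM (P : S × A → S → ℝ) : (S → A → ℝ) →ₗ[ℝ] Matrix S S ℝ where
  toFun π := polMatrix P π
  map_add' π₁ π₂ := by
    ext s s'
    simp [polMatrix, add_mul, Finset.sum_add_distrib]
  map_smul' c π := by
    ext s s'
    simp [polMatrix, Finset.mul_sum, mul_assoc]

/-- The policy matrix map as a continuous linear map. -/
noncomputable def polCLM (P : S × A → S → ℝ) : (S → A → ℝ) →L[ℝ] Matrix S S ℝ :=
  LinearMap.toContinuousLinearMap (polLM P)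

theorem norm_smul_polMatrix_lt_one {γ : ℝ} (hγ : γ ∈ Set.Ioo (0 : ℝ) 1)
    (P : S × A → S → ℝ) (hP : IsKernel P) {π : S → A → ℝ} (hπ : IsPolicy π) :
    ‖γ • polMatrix P π‖ < 1 := by
  have hM0 : ∀ s s', 0 ≤ polMatrix P π s s' := fun s s' =>
    Finset.sum_nonneg fun a _ => mul_nonneg (hπ.1 s a) (hP.1 (s, a) s')
  have hrow : ∀ s, ∑ s', polMatrix P π s s' = 1 := by
    intro s
    have : ∑ s', ∑ a, π s a * P (s, a) s' = ∑ a, ∑ s', π s a * P (s, a) s' :=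
      Finset.sum_comm
    simp only [polMatrix, Matrix.of_apply]
    rw [this]
    have : ∀ a ∈ Finset.univ, ∑ s', π s a * P (s, a) s' = π s a := by
      intro a _
      rw [← Finset.mul_sum, hP.2 (s, a), mul_one]
    rw [Finset.sum_congr rfl this, hπ.2 s]
  have hle : ‖γ • polMatrix P π‖ ≤ γ := by
    rw [Matrix.linfty_opNorm_def]
    have : ∀ i, (∑ j, ‖(γ • polMatrix P π) i j‖₊) ≤ ⟨γ, hγ.1.le⟩ := by
      intro i
      refine NNReal.coe_le_coe.mp ?_
      push_cast
      have : ∀ j ∈ Finset.univ, ‖(γ • polMatrix P π) i j‖ = γ * polMatrix P π i j := by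
        intro j _
        simp only [Matrix.smul_apply, smul_eq_mul]
        exact abs_of_nonneg (mul_nonneg hγ.1.le (hM0 i j))
      rw [Finset.sum_congr rfl this, ← Finset.mul_sum, hrow i, mul_one]
      exact le_rfl
    exact NNReal.coe_le_coe.mpr (Finset.sup_le fun i _ => this i)
  exact lt_of_le_of_lt hle hγ.2

theorem stateDist_eq {γ : ℝ} (hγ : γ ∈ Set.Ioo (0 : ℝ) 1)
    (ν : S → ℝ) (P : S × A → S → ℝ) (hP : IsKernel P) {π : S → A → ℝ} (hπ : IsPolicy π)
    (s : S) :
    stateDist γ ν P π s = evalCLM ν s (Ring.inverse (1 - γ • polMatrix P π)) := by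
  have hnorm := norm_smul_polMatrix_lt_one hγ P hP hπ
  have hsum := hasSum_geom_series_inverse (γ • polMatrix P π) hnorm
  have hsum2 := (ContinuousLinearMap.hasSum (evalCLM ν s)) hsum
  have heq : ∀ t : ℕ, evalCLM ν s ((γ • polMatrix P π) ^ t)
      = γ ^ t * (((polMatrix P π).transpose ^ t).mulVec ν s) := by
    intro t
    have : (γ • polMatrix P π) ^ t = γ ^ t • (polMatrix P π) ^ t := smul_pow γ _ t
    simp only [evalCLM, LinearMap.coe_toContinuousLinearMap', evalLM, LinearMap.coe_mk,
      AddHom.coe_mk, this, Matrix.transpose_smul, Matrix.smul_mulVec,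
      Matrix.transpose_pow, Pi.smul_apply, smul_eq_mul]
  rw [stateDist]
  exact ((hsum2.congr_fun fun t => (heq t).symm).tsum_eq)

theorem stmt4_aux [Nonempty S] [Nonempty A]
    (γ : ℝ) (hγ : γ ∈ Set.Ioo (0 : ℝ) 1)
    (ν : S → ℝ) (P : S × A → S → ℝ) (hP : IsKernel P) :
    ContDiffOn ℝ 1 (fun π : S → A → ℝ => occ γ ν P π) {π | IsPolicy π} := by
  set g : (S → A → ℝ) → S → A → ℝ :=
    fun π s a => π s a * evalCLM ν s (Ring.inverse (1 - γ • polMatrix P π)) with hg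
  have hgsmooth : ∀ π₀ ∈ {π : S → A → ℝ | IsPolicy π}, ContDiffAt ℝ 1 g π₀ := by
    intro π₀ hπ₀
    have hunit : IsUnit (1 - γ • polMatrix P π₀) :=
      isUnit_one_sub_of_norm_lt_one (norm_smul_polMatrix_lt_one hγ P hP hπ₀)
    have hB : ContDiff ℝ 1 (fun π : S → A → ℝ => (1 : Matrix S S ℝ) - γ • polMatrix P π) := by
      have : ContDiff ℝ 1 (fun π : S → A → ℝ => polMatrix P π) := (polCLM P).contDiff
      exact contDiff_const.sub (this.const_smul γ)
    have hinv : ContDiffAt ℝ 1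
        (fun π : S → A → ℝ => Ring.inverse (1 - γ • polMatrix P π)) π₀ := by
      have h1 : ContDiffAt ℝ 1 (Ring.inverse : Matrix S S ℝ → Matrix S S ℝ)
          (1 - γ • polMatrix P π₀) := by
        have := contDiffAt_ringInverse ℝ (n := 1) hunit.unit
        rwa [hunit.unit_spec] at this
      exact h1.comp π₀ hB.contDiffAt
    rw [contDiffAt_pi]
    intro s
    rw [contDiffAt_pi]
    intro a
    have hcoord : ContDiffAt ℝ 1 (fun π : S → A → ℝ => π s a) π₀ := by
      exact ((ContinuousLinearMap.proj a).comp
        (ContinuousLinearMap.proj (R := ℝ) (φ := fun _ : S => A → ℝ) s)).contDiff.contDiffAt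
    exact hcoord.mul (((evalCLM ν s).contDiff.contDiffAt).comp π₀ hinv)
  have : ContDiffOn ℝ 1 g {π : S → A → ℝ | IsPolicy π} :=
    fun π₀ hπ₀ => (hgsmooth π₀ hπ₀).contDiffWithinAt
  refine this.congr ?_
  intro π hπ
  funext s a
  simp only [occ, hg]
  rw [stateDist_eq hγ ν P hP hπ s]

end Aux

/-- for a fixed transition kernel `P`, the policy-to-occupation-measure map
`π ↦ μ_π` is continuously differentiable (class `C¹`) on the set `Π` of stationary
policies (in the sense of `ContDiffOn`, i.e. differentiability within `Π` with
continuous derivative within `Π`). -/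
theorem stmt4 [Fintype S] [Fintype A] [Nonempty S] [Nonempty A] [DecidableEq S]
    (γ : ℝ) (hγ : γ ∈ Set.Ioo (0 : ℝ) 1)
    (ν : S → ℝ) (hν : IsInitDist ν)
    (P : S × A → S → ℝ) (hP : IsKernel P) :
    ContDiffOn ℝ 1 (fun π : S → A → ℝ => occ γ ν P π) {π | IsPolicy π} := by
  exact stmt4_aux γ hγ ν P hP
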